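/- Let R be a commutative F_p-algebra whose Frobenius φ : R → R is flat. Then the class of unit R[F]-modules (those M for which the linearized map F : φ*M → M, i.e., R ⊗_{φ,R} M → M, is an isomorphism) is closed under kernels, cokernels, and extensions in the category of R[F]-modules; in particular it is an abelian subcategory. -/

import Mathlib

open scoped TensorProduct

/-- A copy of `R` viewed as an `R`-algebra via the Frobenius `φ : R → R`, so that
`Rphi p R ⊗[R] M` is the Frobenius base change `φ*M`. -/
def Rphi (_p : ℕ) (R : Type u) : Type u := R

instance Rphi.instCommRing (p : ℕ) (R : Type u) [CommRing R] : CommRing (Rphi p R) :=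
  ‹CommRing R›

noncomputable instance Rphi.instAlgebra (p : ℕ) (R : Type u) [CommRing R] [Fact p.Prime]
    [CharP R p] : Algebra R (Rphi p R) :=
  RingHom.toAlgebra (S := Rphi p R) (frobenius R p)

/-- An `R[F]`-module `(M, F)` (an `R`-module with a Frobenius-semilinear operator `F`) is a
*unit* module if its linearization `φ*M = R ⊗_{φ,R} M → M`, `a ⊗ m ↦ a • F m`, is an
isomorphism.  The linearization is encoded as an additive map `Fs` determined by its values
on pure tensors. -/
def UnitFModule (p : ℕ) (R : Type u) (M : Type v) [Fact p.Prime] [CommRing R] [CharP R p]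
    [AddCommGroup M] [Module R M] (F : M → M) : Prop :=
  ∃ Fs : (Rphi p R) ⊗[R] M →+ M,
    (∀ (a : R) (m : M), Fs ((show Rphi p R from a) ⊗ₜ[R] m) = a • F m) ∧
    Function.Bijective Fs

section A
variable {p : ℕ} [Fact p.Prime] {R : Type u} [CommRing R] [CharP R p]

lemma Rphi.smul_eq (r a : R) :
    (r • (show Rphi p R from a) : Rphi p R) = (show Rphi p R from r ^ p * a) := rfl

variable {M : Type u} [AddCommGroup M] [Module R M]

lemma F_zero (F : M → M) (hadd : ∀ x y, F (x + y) = F x + F y) : F 0 = 0 := by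
  have h := hadd 0 0
  rw [add_zero] at h
  exact (left_eq_add.mp h)

noncomputable def canonFs (F : M → M)
    (hadd : ∀ x y, F (x + y) = F x + F y)
    (hsemi : ∀ (r : R) (x : M), F (r • x) = r ^ p • F x) :
    (Rphi p R) ⊗[R] M →+ M :=
  TensorProduct.liftAddHom
    (AddMonoidHom.mk'
      (fun a => AddMonoidHom.mk' (fun m => (show R from a) • F m)
        (fun x y => by
          show (show R from a) • F (x + y) = (show R from a) • F x + (show R from a) • F y
          rw [hadd, smul_add]))
      (fun a b => by ext m; exact add_smul _ _ _))
    (by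
      intro r a m
      show (show R from (r • a : Rphi p R)) • F m = (show R from a) • F (r • m)
      change (r ^ p * id (α := R) a) • F m = (id (α := R) a) • F (r • m)
      rw [hsemi, mul_smul]
      exact smul_comm _ _ _)

lemma canonFs_tmul (F : M → M) (hadd : ∀ x y, F (x + y) = F x + F y)
    (hsemi : ∀ (r : R) (x : M), F (r • x) = r ^ p • F x) (a : R) (m : M) :
    canonFs F hadd hsemi ((show Rphi p R from a) ⊗ₜ[R] m) = a • F m := by
  unfold canonFs
  erw [TensorProduct.liftAddHom_tmul]
  rfl

lemma canonFs_unique (F : M → M) (hadd : ∀ x y, F (x + y) = F x + F y)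
    (hsemi : ∀ (r : R) (x : M), F (r • x) = r ^ p • F x)
    (Fs : (Rphi p R) ⊗[R] M →+ M)
    (h : ∀ (a : R) (m : M), Fs ((show Rphi p R from a) ⊗ₜ[R] m) = a • F m) :
    Fs = canonFs F hadd hsemi := by
  ext t
  induction t using TensorProduct.induction_on with
  | zero => simp
  | tmul a m => exact (h a m).trans (canonFs_tmul F hadd hsemi a m).symm
  | add x y hx hy => rw [map_add, map_add, hx, hy]

variable {N : Type u} [AddCommGroup N] [Module R N]

lemma canonFs_natural (F : M → M) (haddM : ∀ x y, F (x + y) = F x + F y)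
    (hsemiM : ∀ (r : R) (x : M), F (r • x) = r ^ p • F x)
    (G : N → N) (haddN : ∀ x y, G (x + y) = G x + G y)
    (hsemiN : ∀ (r : R) (x : N), G (r • x) = r ^ p • G x)
    (g : M →ₗ[R] N) (hg : ∀ x, g (F x) = G (g x)) (t : (Rphi p R) ⊗[R] M) :
    canonFs G haddN hsemiN (LinearMap.lTensor (Rphi p R) g t)
      = g (canonFs F haddM hsemiM t) := by
  induction t using TensorProduct.induction_on with
  | zero => simp
  | tmul a m =>
      rw [LinearMap.lTensor_tmul]
      rw [canonFs_tmul F haddM hsemiM a m, canonFs_tmul G haddN hsemiN a (g m)]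
      exact ((g.map_smul (a : R) (F m)).trans (by rw [hg])).symm
  | add x y hx hy => rw [map_add, map_add, map_add, hx, hy, map_add]

lemma unit_iff (F : M → M) (hadd : ∀ x y, F (x + y) = F x + F y)
    (hsemi : ∀ (r : R) (x : M), F (r • x) = r ^ p • F x) :
    (∃ Fs : (Rphi p R) ⊗[R] M →+ M,
      (∀ (a : R) (m : M), Fs ((show Rphi p R from a) ⊗ₜ[R] m) = a • F m) ∧
      Function.Bijective Fs) ↔ Function.Bijective (canonFs F hadd hsemi) := by
  constructor
  · rintro ⟨Fs, h1, h2⟩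
    rwa [canonFs_unique F hadd hsemi Fs h1] at h2
  · intro h
    exact ⟨canonFs F hadd hsemi, canonFs_tmul F hadd hsemi, h⟩

end A

/-- Let `R` be a commutative `F_p`-algebra whose Frobenius `φ` is flat.  Then
the class of unit `R[F]`-modules is closed under kernels, cokernels, and extensions in the
category of `R[F]`-modules.  Here an `R[F]`-module is an `R`-module with an additive,
Frobenius-semilinear operator; morphisms are `R`-linear maps commuting with the operators.

The first conjunct (kernels) and second conjunct (cokernels) refer to a morphism
`g : M → N` of unit modules; the third conjunct (extensions) refers to a short exact
sequence `0 → A → B → C → 0` of `R[F]`-modules with `A` and `C` unit, concluding that `B`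
is unit. -/
theorem stmt12 (p : ℕ) [Fact p.Prime] (R : Type u) [CommRing R] [CharP R p]
    [Module.Flat R (Rphi p R)]
    (M N : Type u) [AddCommGroup M] [Module R M] [AddCommGroup N] [Module R N]
    (FM : M → M) (FN : N → N)
    (hFMadd : ∀ x y, FM (x + y) = FM x + FM y)
    (hFMsemi : ∀ (r : R) (x : M), FM (r • x) = r ^ p • FM x)
    (hFNadd : ∀ x y, FN (x + y) = FN x + FN y)
    (hFNsemi : ∀ (r : R) (x : N), FN (r • x) = r ^ p • FN x)
    (hM : UnitFModule p R M FM) (hN : UnitFModule p R N FN)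
    (g : M →ₗ[R] N) (hg : ∀ x, g (FM x) = FN (g x))
    (A B C : Type u) [AddCommGroup A] [Module R A] [AddCommGroup B] [Module R B]
    [AddCommGroup C] [Module R C]
    (FA : A → A) (FB : B → B) (FC : C → C)
    (hFAadd : ∀ x y, FA (x + y) = FA x + FA y)
    (hFAsemi : ∀ (r : R) (x : A), FA (r • x) = r ^ p • FA x)
    (hFBadd : ∀ x y, FB (x + y) = FB x + FB y)
    (hFBsemi : ∀ (r : R) (x : B), FB (r • x) = r ^ p • FB x)
    (hFCadd : ∀ x y, FC (x + y) = FC x + FC y)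
    (hFCsemi : ∀ (r : R) (x : C), FC (r • x) = r ^ p • FC x)
    (f : A →ₗ[R] B) (q : B →ₗ[R] C)
    (hfF : ∀ x, f (FA x) = FB (f x)) (hqF : ∀ x, q (FB x) = FC (q x))
    (hfinj : Function.Injective f) (hqsurj : Function.Surjective q)
    (hexact : ∀ b : B, q b = 0 ↔ b ∈ LinearMap.range f)
    (hA : UnitFModule p R A FA) (hC : UnitFModule p R C FC) :
    (∃ FK : ↥(LinearMap.ker g) → ↥(LinearMap.ker g),
      (∀ x : ↥(LinearMap.ker g), (FK x : M) = FM (x : M)) ∧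
      UnitFModule p R ↥(LinearMap.ker g) FK) ∧
    (∃ FQ : (N ⧸ LinearMap.range g) → (N ⧸ LinearMap.range g),
      (∀ y : N, FQ (Submodule.Quotient.mk y) = Submodule.Quotient.mk (FN y)) ∧
      UnitFModule p R (N ⧸ LinearMap.range g) FQ) ∧
    UnitFModule p R B FB := by
  classical
  have hMb : Function.Bijective (canonFs FM hFMadd hFMsemi) :=
    (unit_iff FM hFMadd hFMsemi).mp hM
  have hNb : Function.Bijective (canonFs FN hFNadd hFNsemi) :=
    (unit_iff FN hFNadd hFNsemi).mp hN
  have hAb : Function.Bijective (canonFs FA hFAadd hFAsemi) :=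
    (unit_iff FA hFAadd hFAsemi).mp hA
  have hCb : Function.Bijective (canonFs FC hFCadd hFCsemi) :=
    (unit_iff FC hFCadd hFCsemi).mp hC
  refine ⟨?_, ?_, ?_⟩
  · -- kernels
    set K := LinearMap.ker g with hK
    have hFK0 : ∀ x : K, g (FM (x : M)) = 0 := by
      intro x
      rw [hg, (LinearMap.mem_ker).mp x.2, F_zero FN hFNadd]
    refine ⟨fun x => ⟨FM (x : M), (LinearMap.mem_ker).mpr (hFK0 x)⟩, fun x => rfl, ?_⟩
    set FK : K → K := fun x => ⟨FM (x : M), (LinearMap.mem_ker).mpr (hFK0 x)⟩ with hFKdef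
    have hFKadd : ∀ x y : K, FK (x + y) = FK x + FK y := by
      intro x y; apply Subtype.ext
      show FM ((x : M) + (y : M)) = FM (x : M) + FM (y : M)
      exact hFMadd _ _
    have hFKsemi : ∀ (r : R) (x : K), FK (r • x) = r ^ p • FK x := by
      intro r x; apply Subtype.ext
      show FM (r • (x : M)) = r ^ p • FM (x : M)
      exact hFMsemi _ _
    refine (unit_iff FK hFKadd hFKsemi).mpr ?_
    set ι := K.subtype with hι
    have hcomm : ∀ x : K, ι (FK x) = FM (ι x) := fun x => rfl
    have natK : ∀ t, canonFs FM hFMadd hFMsemi (LinearMap.lTensor (Rphi p R) ι t)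
        = ι (canonFs FK hFKadd hFKsemi t) :=
      canonFs_natural FK hFKadd hFKsemi FM hFMadd hFMsemi ι hcomm
    have hTι : Function.Injective (LinearMap.lTensor (Rphi p R) ι) :=
      Module.Flat.lTensor_preserves_injective_linearMap (M := Rphi p R) ι
        (Submodule.injective_subtype K)
    have hex : Function.Exact (LinearMap.lTensor (Rphi p R) ι)
        (LinearMap.lTensor (Rphi p R) g) :=
      Module.Flat.lTensor_exact (Rphi p R) (LinearMap.exact_subtype_ker_map g)
    constructor
    · intro s t hst
      have h1 : ι (canonFs FK hFKadd hFKsemi s) = ι (canonFs FK hFKadd hFKsemi t) := by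
        rw [hst]
      rw [← natK, ← natK] at h1
      exact hTι (hMb.1 h1)
    · intro k
      obtain ⟨t, ht⟩ := hMb.2 (ι k)
      have h2 : canonFs FN hFNadd hFNsemi (LinearMap.lTensor (Rphi p R) g t) = 0 := by
        rw [canonFs_natural FM hFMadd hFMsemi FN hFNadd hFNsemi g hg t, ht]
        exact (LinearMap.mem_ker).mp k.2
      have h3 : LinearMap.lTensor (Rphi p R) g t = 0 := by
        apply hNb.1; rw [h2, map_zero]
      obtain ⟨s, hs⟩ := (hex t).mp h3
      refine ⟨s, Submodule.injective_subtype K ?_⟩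
      rw [← natK, hs, ht]
  · -- cokernels
    set P := LinearMap.range g with hP
    have hFNrange : ∀ y ∈ P, FN y ∈ P := by
      rintro _ ⟨x, rfl⟩
      exact ⟨FM x, hg x⟩
    have FNsub : ∀ x y : N, FN (x - y) = FN x - FN y := fun x y =>
      map_sub (AddMonoidHom.mk' FN hFNadd) x y
    set FQ : (N ⧸ P) → (N ⧸ P) := fun z => Submodule.Quotient.mk (FN z.out) with hFQdef
    have FQmk : ∀ y : N, FQ (Submodule.Quotient.mk y) = Submodule.Quotient.mk (FN y) := by
      intro y
      apply (Submodule.Quotient.eq P).mpr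
      rw [← FNsub]
      apply hFNrange
      apply (Submodule.Quotient.eq P).mp
      exact Quotient.out_eq' _
    refine ⟨FQ, FQmk, ?_⟩
    have hFQadd : ∀ z w, FQ (z + w) = FQ z + FQ w := by
      intro z w
      obtain ⟨y, rfl⟩ := Submodule.Quotient.mk_surjective P z
      obtain ⟨y', rfl⟩ := Submodule.Quotient.mk_surjective P w
      rw [← Submodule.Quotient.mk_add, FQmk, FQmk, FQmk, hFNadd, Submodule.Quotient.mk_add]
    have hFQsemi : ∀ (r : R) (z : N ⧸ P), FQ (r • z) = r ^ p • FQ z := by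
      intro r z
      obtain ⟨y, rfl⟩ := Submodule.Quotient.mk_surjective P z
      rw [← Submodule.Quotient.mk_smul, FQmk, FQmk, hFNsemi, Submodule.Quotient.mk_smul]
    refine (unit_iff FQ hFQadd hFQsemi).mpr ?_
    set π := P.mkQ with hπ
    have hcomm : ∀ y : N, π (FN y) = FQ (π y) := by
      intro y
      rw [Submodule.mkQ_apply, Submodule.mkQ_apply, FQmk]
    have natQ : ∀ t, canonFs FQ hFQadd hFQsemi (LinearMap.lTensor (Rphi p R) π t)
        = π (canonFs FN hFNadd hFNsemi t) :=
      canonFs_natural FN hFNadd hFNsemi FQ hFQadd hFQsemi π hcomm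
    have hTπ : Function.Surjective (LinearMap.lTensor (Rphi p R) π) :=
      LinearMap.lTensor_surjective (Rphi p R) (Submodule.mkQ_surjective P)
    have hex : Function.Exact (LinearMap.lTensor (Rphi p R) g)
        (LinearMap.lTensor (Rphi p R) π) :=
      lTensor_exact (Rphi p R) (LinearMap.exact_map_mkQ_range g) (Submodule.mkQ_surjective P)
    constructor
    · rw [injective_iff_map_eq_zero]
      intro u hu
      obtain ⟨t, rfl⟩ := hTπ u
      rw [natQ] at hu
      have h1 : canonFs FN hFNadd hFNsemi t ∈ P := by
        rwa [← Submodule.ker_mkQ P, LinearMap.mem_ker]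
      obtain ⟨x, hx⟩ := h1
      obtain ⟨s, hs⟩ := hMb.2 x
      have h2 : LinearMap.lTensor (Rphi p R) g s = t := by
        apply hNb.1
        rw [canonFs_natural FM hFMadd hFMsemi FN hFNadd hFNsemi g hg s, hs, hx]
      rw [← h2]
      exact hex.apply_apply_eq_zero s
    · intro z
      obtain ⟨y, hy⟩ := Submodule.mkQ_surjective P z
      obtain ⟨t, ht⟩ := hNb.2 y
      exact ⟨LinearMap.lTensor (Rphi p R) π t, by rw [natQ, ht, hy]⟩
  · -- extensions
    refine (unit_iff FB hFBadd hFBsemi).mpr ?_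
    have natf : ∀ t, canonFs FB hFBadd hFBsemi (LinearMap.lTensor (Rphi p R) f t)
        = f (canonFs FA hFAadd hFAsemi t) :=
      canonFs_natural FA hFAadd hFAsemi FB hFBadd hFBsemi f hfF
    have natq : ∀ t, canonFs FC hFCadd hFCsemi (LinearMap.lTensor (Rphi p R) q t)
        = q (canonFs FB hFBadd hFBsemi t) :=
      canonFs_natural FB hFBadd hFBsemi FC hFCadd hFCsemi q hqF
    have hfq : Function.Exact f q := by
      intro b
      rw [hexact b]
      exact Iff.rfl
    have hTf : Function.Injective (LinearMap.lTensor (Rphi p R) f) :=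
      Module.Flat.lTensor_preserves_injective_linearMap (M := Rphi p R) f hfinj
    have hTq : Function.Surjective (LinearMap.lTensor (Rphi p R) q) :=
      LinearMap.lTensor_surjective (Rphi p R) hqsurj
    have hex : Function.Exact (LinearMap.lTensor (Rphi p R) f)
        (LinearMap.lTensor (Rphi p R) q) :=
      Module.Flat.lTensor_exact (Rphi p R) hfq
    constructor
    · rw [injective_iff_map_eq_zero]
      intro t ht
      have h1 : LinearMap.lTensor (Rphi p R) q t = 0 := by
        apply hCb.1
        rw [natq, ht, map_zero, map_zero]
      obtain ⟨s, hs⟩ := (hex t).mp h1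
      have h2 : canonFs FA hFAadd hFAsemi s = 0 := by
        apply hfinj
        rw [← natf, hs, ht, map_zero]
      have h3 : s = 0 := by
        apply hAb.1; rw [h2, map_zero]
      rw [← hs, h3, map_zero]
    · intro b
      obtain ⟨u, hu⟩ := hCb.2 (q b)
      obtain ⟨t, rfl⟩ := hTq u
      have h1 : q (b - canonFs FB hFBadd hFBsemi t) = 0 := by
        rw [map_sub, ← natq, hu, sub_self]
      obtain ⟨a, ha⟩ := (hexact _).mp h1
      obtain ⟨s, hs⟩ := hAb.2 a
      refine ⟨t + LinearMap.lTensor (Rphi p R) f s, ?_⟩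
      rw [map_add, natf, hs, ha]
      abel
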